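/- arXiv:2407.19974 — 6 statements merged into one kernel-verified Lean document; each statement's English description precedes it below -/
import Mathlib

section
/- Let L/ℚ be an algebraic field extension, O an order in L, and let n ≥ 1, m ≥ 2 be integers. Let f ∈ L[x₁,…,xₙ] be a homogeneous polynomial of degree m and Λ ⊆ Lⁿ a finitely generated O-submodule with f(v) ∈ O for all v ∈ Λ. Then there exist a number field K with K ⊆ L such that the fraction field of O ∩ O_K equals K, and a finitely generated (O ∩ O_K)-submodule Λ₀ ⊆ Λ such that f(w) ∈ O ∩ O_K for all w ∈ Λ₀ and Λ equals the O-span of Λ₀ inside Lⁿ. -/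
set_option synthInstance.maxHeartbeats 1000000
set_option maxHeartbeats 1000000

open MvPolynomial

open Polynomial in
theorem aux_denom_mic {L : Type*} [Field L] [CharZero L] (O : Subalgebra ℤ L)
    (hOint : ∀ x ∈ O, IsIntegral ℤ x) {b : L} (hb : b ∈ O) (hb0 : b ≠ 0) :
    ∃ c₀ : ℤ, c₀ ≠ 0 ∧ ∃ s ∈ O, (c₀ : L) = -(b * s) := by
  have hbi : IsIntegral ℤ b := hOint b hb
  set p := minpoly ℤ b with hp
  have hirr := minpoly.irreducible hbi
  have haev : Polynomial.aeval b p = 0 := minpoly.aeval ℤ b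
  have hc0 : p.coeff 0 ≠ 0 := by
    intro h
    obtain ⟨q, hq⟩ := Polynomial.X_dvd_iff.2 h
    rcases hirr.isUnit_or_isUnit hq with hu | hu
    · exact Polynomial.not_isUnit_X hu
    · obtain ⟨r, hr, hrq⟩ := Polynomial.isUnit_iff.1 hu
      rw [hq, ← hrq] at haev
      simp only [map_mul, Polynomial.aeval_X, Polynomial.aeval_C] at haev
      rcases mul_eq_zero.1 haev with h' | h'
      · exact hb0 h'
      · refine hr.ne_zero ?_
        have : ((r : ℤ) : L) = 0 := h'
        exact_mod_cast this
  refine ⟨p.coeff 0, hc0, ∑ i ∈ Finset.range p.natDegree, p.coeff (i + 1) • b ^ i, ?_, ?_⟩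
  · exact Subalgebra.sum_mem _ fun i _ => Subalgebra.zsmul_mem _ (Subalgebra.pow_mem _ hb _) _
  · have key := Polynomial.aeval_eq_sum_range (R := ℤ) (S := L) (p := p) b
    rw [haev, Finset.sum_range_succ'] at key
    have h2 : (0 : L) = b * (∑ i ∈ Finset.range p.natDegree, p.coeff (i + 1) • b ^ i)
        + ((p.coeff 0 : ℤ) : L) := by
      rw [key, Finset.mul_sum]
      congr 1
      · refine Finset.sum_congr rfl fun i _ => ?_
        rw [zsmul_eq_mul, zsmul_eq_mul, pow_succ]
        ring
      · simp [zsmul_eq_mul]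
    linear_combination -h2

theorem mic_lattice_defined_over_number_field
    (L : Type*) [Field L] [CharZero L] [Algebra.IsAlgebraic ℚ L]
    -- O is an order in L: a subring of the algebraic integers of L with fraction field L
    (O : Subalgebra ℤ L)
    (hOint : ∀ x ∈ O, IsIntegral ℤ x)
    (hOfrac : ∀ x : L, ∃ a ∈ O, ∃ b ∈ O, b ≠ 0 ∧ x = a / b)
    (n m : ℕ) (hn : 1 ≤ n) (hm : 2 ≤ m)
    (f : MvPolynomial (Fin n) L) (hf : f.IsHomogeneous m)
    (Λ : Submodule O (Fin n → L)) (hΛ : Λ.FG)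
    (hfΛ : ∀ v ∈ Λ, eval v f ∈ O) :
    -- there is a number field K ⊆ L ...
    ∃ K : IntermediateField ℚ L, FiniteDimensional ℚ K ∧
      -- ... such that, with R = O ∩ O_K (the elements of O lying in K and integral over ℤ),
      -- the fraction field of R is K, ...
      (∀ x : L, x ∈ K →
        ∃ a ∈ O ⊓ Subalgebra.restrictScalars ℤ K.toSubalgebra ⊓ integralClosure ℤ L,
          ∃ b ∈ O ⊓ Subalgebra.restrictScalars ℤ K.toSubalgebra ⊓ integralClosure ℤ L,
            b ≠ 0 ∧ x = a / b) ∧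
      -- ... and a finitely generated R-submodule Λ₀ ⊆ Λ on which f takes values in R
      -- and whose O-span is Λ
      ∃ Λ₀ : Submodule (O ⊓ Subalgebra.restrictScalars ℤ K.toSubalgebra ⊓
          integralClosure ℤ L : Subalgebra ℤ L) (Fin n → L),
        Λ₀.FG ∧
        (Λ₀ : Set (Fin n → L)) ⊆ (Λ : Set (Fin n → L)) ∧
        (∀ w ∈ Λ₀, eval w f ∈
          O ⊓ Subalgebra.restrictScalars ℤ K.toSubalgebra ⊓ integralClosure ℤ L) ∧
        Submodule.span O (Λ₀ : Set (Fin n → L)) = Λ := by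
  classical
  obtain ⟨S, hS⟩ := hΛ
  -- the composed polynomial g(t) = f(∑_{v ∈ S} t_v • v)
  set φ : Fin n → MvPolynomial {v // v ∈ S} L :=
    fun j => ∑ v ∈ S.attach, MvPolynomial.C (v.1 j) * MvPolynomial.X v with hφ
  set g : MvPolynomial {v // v ∈ S} L := MvPolynomial.aeval φ f with hg
  set cs : Set L := (fun d => g.coeff d) '' ↑g.support with hcs
  have hcsfin : cs.Finite := g.support.finite_toSet.image _
  set K : IntermediateField ℚ L := IntermediateField.adjoin ℚ cs with hK
  have hfd : FiniteDimensional ℚ K := by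
    haveI := hcsfin.to_subtype
    exact IntermediateField.finiteDimensional_adjoin fun x _ =>
      (Algebra.IsAlgebraic.isAlgebraic (R := ℚ) x).isIntegral
  refine ⟨K, hfd, ?_, ?_⟩
  · -- the fraction field of R is K
    intro x hx
    by_cases hx0 : x = 0
    · refine ⟨0, ?_, 1, ?_, one_ne_zero, by simp [hx0]⟩
      · exact Subalgebra.zero_mem _
      · exact Subalgebra.one_mem _
    · obtain ⟨a, ha, b, hb, hb0, hxab⟩ := hOfrac x
      obtain ⟨c₀, hc0, s, hsO, hcbs⟩ := aux_denom_mic O hOint hb hb0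
      have hc0L : ((c₀ : ℤ) : L) ≠ 0 := Int.cast_ne_zero.2 hc0
      have hxc : x * (c₀ : L) = -(a * s) := by
        rw [hcbs, hxab]
        field_simp
      refine ⟨x * (c₀ : L), ?_, (c₀ : L), ?_, hc0L, by field_simp⟩
      · have hmO : x * (c₀ : L) ∈ O := by
          rw [hxc]; exact Subalgebra.neg_mem _ (Subalgebra.mul_mem _ ha hsO)
        refine ⟨⟨hmO, ?_⟩, ?_⟩
        · exact Subalgebra.mem_restrictScalars ℤ |>.2
            (K.toSubalgebra.mul_mem hx (K.intCast_mem c₀))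
        · exact (mem_integralClosure_iff ℤ L).2 (hOint _ hmO)
      · refine ⟨⟨?_, ?_⟩, ?_⟩
        · exact O.intCast_mem c₀
        · exact Subalgebra.mem_restrictScalars ℤ |>.2 (K.intCast_mem c₀)
        · refine (mem_integralClosure_iff ℤ L).2 ?_
          have : IsIntegral ℤ ((algebraMap ℤ L) c₀) := isIntegral_algebraMap
          rwa [algebraMap_int_eq, eq_intCast] at this
  · -- the lattice Λ₀
    set Rs : Subalgebra ℤ L := O ⊓ Subalgebra.restrictScalars ℤ K.toSubalgebra ⊓
      integralClosure ℤ L with hRs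
    have hRsO : ∀ r : Rs, (r : L) ∈ O := fun r => r.2.1.1
    have hRsK : ∀ r : Rs, (r : L) ∈ K := fun r => Subalgebra.mem_restrictScalars ℤ |>.1 r.2.1.2
    have hsmul : ∀ (r : Rs) (x : Fin n → L) (hr : (r : L) ∈ O),
        r • x = (⟨(r : L), hr⟩ : O) • x := fun r x hr => rfl
    set Λ₀ : Submodule Rs (Fin n → L) := Submodule.span Rs (↑S : Set (Fin n → L)) with hΛ₀
    have hsubset : (Λ₀ : Set (Fin n → L)) ⊆ (Λ : Set (Fin n → L)) := by
      intro w hw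
      refine Submodule.span_induction (fun v hv => ?_) (Submodule.zero_mem Λ)
        (fun x y _ _ hx hy => Submodule.add_mem Λ hx hy) (fun r x _ hx => ?_) hw
      · rw [← hS]; exact Submodule.subset_span hv
      · rw [hsmul r x (hRsO r)]
        exact Submodule.smul_mem Λ _ hx
    have hcoeffK : ∀ d ∈ g.support, g.coeff d ∈ K := fun d hd =>
      IntermediateField.subset_adjoin ℚ cs ⟨d, hd, rfl⟩
    -- the key evaluation identity
    have hkey : ∀ c : (Fin n → L) → Rs,
        eval (∑ v ∈ S, c v • v) f
          = eval (fun v : {x // x ∈ S} => ((c v.1 : L))) g := by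
      intro c
      set e : {x // x ∈ S} → L := fun v => ((c v.1 : L)) with he
      have h1 : eval e g = MvPolynomial.aeval (fun j => MvPolynomial.aeval e (φ j)) f := by
        rw [hg, ← MvPolynomial.comp_aeval_apply]
        exact (DFunLike.congr_fun (MvPolynomial.coe_aeval_eq_eval e) (MvPolynomial.aeval φ f)).symm
      have h2 : (fun j => MvPolynomial.aeval e (φ j))
          = fun j => (∑ v ∈ S, c v • v) j := by
        funext j
        simp only [hφ, map_sum, map_mul, MvPolynomial.aeval_C, MvPolynomial.aeval_X,
          Algebra.algebraMap_self, RingHom.id_apply]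
        rw [Finset.sum_apply]
        rw [← Finset.sum_attach S (fun v => (c v • v) j)]
        refine Finset.sum_congr rfl fun v _ => ?_
        show v.1 j * e v = (c v.1 • v.1) j
        simp only [he, Pi.smul_apply, Algebra.smul_def]
        exact mul_comm _ _
      rw [h1, h2]
      exact DFunLike.congr_fun (MvPolynomial.coe_aeval_eq_eval _) f
    refine ⟨Λ₀, ⟨S, rfl⟩, hsubset, ?_, ?_⟩
    · intro w hw
      obtain ⟨c, -, hc⟩ := Submodule.mem_span_finset.1 hw
      have hwΛ : w ∈ Λ := hsubset hw
      have hO : eval w f ∈ O := hfΛ w hwΛ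
      refine ⟨⟨hO, ?_⟩, (mem_integralClosure_iff ℤ L).2 (hOint _ hO)⟩
      refine Subalgebra.mem_restrictScalars ℤ |>.2 ?_
      rw [← hc, hkey c]
      have : eval (fun v : {x // x ∈ S} => ((c v.1 : L))) g ∈ K :=
        MvPolynomial.eval_mem hcoeffK fun v => hRsK (c v.1)
      exact this
    · refine le_antisymm (Submodule.span_le.2 hsubset) ?_
      rw [← hS]
      exact Submodule.span_mono Submodule.subset_span
end

section
/- Let m ≥ 2 be an even integer and K a totally real number field of degree d = [K:ℚ] with discriminant Δ. For every totally positive algebraic integer α ∈ O_K with N_{K/ℚ}(α) > Δ^{m/2}, there exists a nonzero β ∈ O_K such that α − β^m is totally positive. -/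
open NumberField

open Module NumberField.InfinitePlace NumberField.mixedEmbedding MeasureTheory ENNReal NNReal

theorem aux_discr_nonneg (K : Type*) [Field K] [NumberField K]
    (hK : ∀ σ : K →+* ℂ, ∀ x : K, (σ x).im = 0) : 0 ≤ (discr K : ℚ) := by
  rw [coe_discr]
  have hcard : Fintype.card (Module.Free.ChooseBasisIndex ℤ (𝓞 K)) = Fintype.card (K →ₐ[ℚ] ℂ) := by
    rw [← finrank_eq_card_chooseBasisIndex, RingOfIntegers.rank, AlgHom.card]
  let e := Fintype.equivOfCardEq hcard
  have h := Algebra.discr_eq_det_embeddingsMatrixReindex_pow_two ℚ ℂ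
    (fun i => integralBasis K i) e
  set M := Algebra.embeddingsMatrixReindex ℚ ℂ (fun i => integralBasis K i) e with hM
  have hreal : ∀ i j, (M i j).im = 0 := by
    intro i j
    simp only [hM, Algebra.embeddingsMatrixReindex, Algebra.embeddingsMatrix,
      Matrix.reindex_apply, Matrix.submatrix_apply, Matrix.of_apply, Equiv.refl_symm,
      Equiv.refl_apply, Equiv.apply_symm_apply]
    exact hK ((e j) : K →+* ℂ) _
  have hdet : (M.det).im = 0 := by
    have h1 : (starRingEnd ℂ) M.det = M.det := by
      rw [RingHom.map_det]
      congr 1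
      ext i j
      exact Complex.conj_eq_iff_im.mpr (hreal i j)
    exact Complex.conj_eq_iff_im.mp h1
  have h2 := congrArg Complex.re h
  have h3 : (algebraMap ℚ ℂ) (Algebra.discr ℚ fun i => (integralBasis K) i) =
      ((Algebra.discr ℚ fun i => (integralBasis K) i : ℚ) : ℂ) := by
    norm_cast
  rw [h3] at h2
  rw [Complex.ratCast_re] at h2
  have h4 : (M.det ^ 2).re = M.det.re ^ 2 := by
    rw [sq, Complex.mul_re, hdet, sq]; ring
  rw [h4] at h2
  have h5 : (0:ℝ) ≤ ((Algebra.discr ℚ fun i => (integralBasis K) i : ℚ) : ℝ) :=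
    h2 ▸ sq_nonneg _
  exact_mod_cast h5

theorem exists_mth_power_below
    (m : ℕ) (hm : 2 ≤ m) (hme : Even m)
    (K : Type*) [Field K] [NumberField K]
    -- K is totally real
    (hK : ∀ σ : K →+* ℂ, ∀ x : K, (σ x).im = 0)
    (α : 𝓞 K)
    -- α is totally positive
    (hαpos : ∀ σ : K →+* ℂ, 0 < (σ (α : K)).re)
    -- N_{K/ℚ}(α) > Δ^{m/2}
    (hnorm : ((discr K : ℚ)) ^ (m / 2) < Algebra.norm ℚ (α : K)) :
    ∃ β : 𝓞 K, β ≠ 0 ∧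
      ∀ σ : K →+* ℂ, 0 < (σ ((α : K) - (β : K) ^ m)).re := by
  classical
  have hm0 : (m:ℝ) ≠ 0 := Nat.cast_ne_zero.mpr (by omega)
  have hreal : ∀ w : InfinitePlace K, IsReal w := by
    intro w
    rw [InfinitePlace.isReal_iff, NumberField.ComplexEmbedding.isReal_iff]
    exact RingHom.ext fun x => Complex.conj_eq_iff_im.mpr (hK _ x)
  have hmult : ∀ w : InfinitePlace K, mult w = 1 := fun w => by
    rw [InfinitePlace.mult]; simp [hreal w]
  haveI : IsEmpty {w : InfinitePlace K // IsComplex w} :=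
    ⟨fun ⟨w, hw⟩ => (not_isReal_iff_isComplex.mpr hw) (hreal w)⟩
  have hc : nrComplexPlaces K = 0 := Fintype.card_eq_zero
  have hd : nrRealPlaces K = finrank ℚ K := by
    have := card_add_two_mul_card_eq_rank K; omega
  have hΔ : (0:ℚ) ≤ (discr K : ℚ) := aux_discr_nonneg K hK
  have hΔR : (0:ℝ) ≤ ((discr K : ℤ) : ℝ) := by exact_mod_cast hΔ
  have hα0 : (α:K) ≠ 0 := by
    intro h
    rw [h, Algebra.norm_zero] at hnorm
    exact absurd hnorm (not_lt.mpr (pow_nonneg hΔ _))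
  have hwα : ∀ w : InfinitePlace K, 0 < w (α:K) := fun w => pos_iff.mpr hα0
  set f : InfinitePlace K → ℝ≥0 := fun w => Real.toNNReal (w (α:K)) ^ ((m:ℝ)⁻¹) with hf
  have hfc : ∀ w : InfinitePlace K, (f w : ℝ) = (w (α:K)) ^ ((m:ℝ)⁻¹) := fun w => by
    rw [hf]
    rw [NNReal.coe_rpow, Real.coe_toNNReal _ (apply_nonneg w _)]
  -- the norm inequality in ℝ
  have hN : ((discr K : ℤ) : ℝ) ^ (m/2) < |((Algebra.norm ℚ (α:K) : ℚ) : ℝ)| := by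
    refine lt_of_lt_of_le ?_ (le_abs_self _)
    exact_mod_cast hnorm
  have hNpos : (0:ℝ) < |((Algebra.norm ℚ (α:K) : ℚ) : ℝ)| :=
    lt_of_le_of_lt (pow_nonneg hΔR _) hN
  -- key real inequality
  have key : Real.sqrt |((discr K : ℤ) : ℝ)| <
      ∏ w : InfinitePlace K, (w (α:K)) ^ ((m:ℝ)⁻¹) := by
    have hprod : ∏ w : InfinitePlace K, (w (α:K)) ^ ((m:ℝ)⁻¹) =
        (∏ w : InfinitePlace K, w (α:K)) ^ ((m:ℝ)⁻¹) := by
      rw [← Real.finset_prod_rpow _ _ (fun w _ => (hwα w).le)]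
    have hnp : ∏ w : InfinitePlace K, w (α:K) = |((Algebra.norm ℚ (α:K) : ℚ) : ℝ)| := by
      have := prod_eq_abs_norm (α:K)
      simp only [hmult, pow_one] at this
      exact_mod_cast this
    rw [hprod, hnp]
    refine lt_of_pow_lt_pow_left₀ m (Real.rpow_nonneg hNpos.le _) ?_
    have h1 : (|((Algebra.norm ℚ (α:K) : ℚ) : ℝ)| ^ ((m:ℝ)⁻¹)) ^ m
        = |((Algebra.norm ℚ (α:K) : ℚ) : ℝ)| := by
      rw [← Real.rpow_natCast (_ ^ ((m:ℝ)⁻¹)) m, ← Real.rpow_mul hNpos.le,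
        inv_mul_cancel₀ hm0, Real.rpow_one]
    obtain ⟨k, hk⟩ := hme
    have hmk : m = 2 * k := by omega
    have h2 : Real.sqrt |((discr K : ℤ) : ℝ)| ^ m = ((discr K : ℤ) : ℝ) ^ (m/2) := by
      rw [hmk, pow_mul, Real.sq_sqrt (abs_nonneg _), abs_of_nonneg hΔR]
      congr 1
      omega
    rw [h1, h2]
    exact hN
  -- volume bound
  have hvol : minkowskiBound K ↑1 < volume (convexBodyLT K f) := by
    rw [convexBodyLT_volume, minkowskiBound,
      volume_fundamentalDomain_fractionalIdealLatticeBasis,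
      mixedEmbedding.volume_fundamentalDomain_latticeBasis, mixedEmbedding.finrank, hc,
      Units.val_one, FractionalIdeal.absNorm_one]
    simp only [pow_zero, one_mul, Rat.cast_one, ENNReal.ofReal_one]
    rw [show ((2:ℝ≥0∞) ^ finrank ℚ K) = ((2:ℝ≥0) ^ finrank ℚ K : ℝ≥0) by push_cast; ring,
      ← ENNReal.coe_mul, ← ENNReal.coe_mul, ENNReal.coe_lt_coe, ← NNReal.coe_lt_coe]
    push_cast [convexBodyLTFactor, hc, hd]
    simp only [pow_zero, mul_one]
    calc Real.sqrt ‖(discr K : ℤ)‖ * 2 ^ finrank ℚ K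
        < (∏ w : InfinitePlace K, (w (α:K)) ^ ((m:ℝ)⁻¹)) * 2 ^ finrank ℚ K := by
          refine mul_lt_mul_of_pos_right ?_ (by positivity)
          rw [Int.norm_eq_abs]
          exact_mod_cast key
      _ = 2 ^ finrank ℚ K * ∏ w : InfinitePlace K, ((f w : ℝ)) ^ mult w := by
          rw [mul_comm]
          congr 1
          exact Finset.prod_congr rfl fun w _ => by rw [hfc, hmult, pow_one]
  obtain ⟨β, hβ0, hβ⟩ := exists_ne_zero_mem_ringOfIntegers_lt K hvol
  refine ⟨β, hβ0, fun σ => ?_⟩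
  set w := InfinitePlace.mk σ with hw
  have hb : ‖σ (β:K)‖ < (w (α:K)) ^ ((m:ℝ)⁻¹) := by
    have := hβ w
    rw [hfc] at this
    exact this
  set r : ℝ := (σ (β:K)).re with hr
  have hσβ : σ (β:K) = (r : ℂ) := Complex.ext rfl (by rw [Complex.ofReal_im]; exact hK σ _)
  have habs : ‖σ (β:K)‖ = |r| := by rw [hσβ, Complex.norm_real, Real.norm_eq_abs]
  have hwa : w (α:K) = (σ (α:K)).re := by
    have hσα : σ (α:K) = ((σ (α:K)).re : ℂ) :=
      Complex.ext rfl (by rw [Complex.ofReal_im]; exact hK σ _)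
    rw [hw, apply, hσα, Complex.norm_real, Real.norm_eq_abs, Complex.ofReal_re]
    exact abs_of_pos (hαpos σ)
  have hlt : r ^ m < (σ (α:K)).re := by
    rw [← hme.pow_abs]
    calc |r| ^ m < ((w (α:K)) ^ ((m:ℝ)⁻¹)) ^ m := by
          refine pow_lt_pow_left₀ ?_ (abs_nonneg r) (by omega)
          rw [← habs]; exact hb
      _ = w (α:K) := by
          rw [← Real.rpow_natCast (_ ^ ((m:ℝ)⁻¹)) m, ← Real.rpow_mul (hwα w).le,
            inv_mul_cancel₀ hm0, Real.rpow_one]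
      _ = (σ (α:K)).re := hwa
  rw [map_sub, Complex.sub_re, map_pow, hσβ, ← Complex.ofReal_pow, Complex.ofReal_re, sub_pos]
  exact hlt
end

section
/- Let m ≥ 2 be an even integer and K a totally real number field with discriminant Δ. Then there exists a finite set S ⊆ O_K^+ with N_{K/ℚ}(α) ≤ Δ^{m/2} for every α ∈ S, such that every γ ∈ O_K^+ can be written as γ = α·x^m + β₁^m + ⋯ + β_r^m for some α ∈ S, some integer r ≥ 0, and some x, β₁, …, β_r ∈ O_K. -/
open NumberField

section WLRAux

open NumberField.InfinitePlace NumberField.mixedEmbedding MeasureTheory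
open scoped NNReal ENNReal nonZeroDivisors

set_option linter.unusedSectionVars false

variable {K : Type*} [Field K] [NumberField K]

theorem wlr_isReal (hK : ∀ σ : K →+* ℂ, ∀ x : K, (σ x).im = 0) (w : InfinitePlace K) :
    w.IsReal := by
  rw [← mk_embedding w, isReal_mk_iff, ComplexEmbedding.isReal_iff]
  ext x
  exact Complex.conj_eq_iff_im.mpr (hK _ x)

theorem wlr_nrComplex (hK : ∀ σ : K →+* ℂ, ∀ x : K, (σ x).im = 0) :
    nrComplexPlaces K = 0 := by
  classical
  rw [Fintype.card_eq_zero_iff]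
  exact ⟨fun w => not_isReal_iff_isComplex.mpr w.2 (wlr_isReal hK w.1)⟩

theorem wlr_mult (hK : ∀ σ : K →+* ℂ, ∀ x : K, (σ x).im = 0) (w : InfinitePlace K) :
    mult w = 1 := if_pos (wlr_isReal hK w)

theorem wlr_nrReal (hK : ∀ σ : K →+* ℂ, ∀ x : K, (σ x).im = 0) :
    nrRealPlaces K = Module.finrank ℚ K := by
  have := card_add_two_mul_card_eq_rank K
  rw [wlr_nrComplex hK] at this
  simpa using this

theorem wlr_ofReal (hK : ∀ σ : K →+* ℂ, ∀ x : K, (σ x).im = 0) (σ : K →+* ℂ) (x : K) :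
    σ x = (((σ x).re : ℝ) : ℂ) := by
  rw [← Complex.re_add_im (σ x), hK σ x]
  simp

theorem wlr_norm_eq_prod_re (hK : ∀ σ : K →+* ℂ, ∀ x : K, (σ x).im = 0) (x : K) :
    ((Algebra.norm ℚ x : ℚ) : ℝ) = ∏ σ : K →+* ℂ, (σ x).re := by
  have h := Algebra.norm_eq_prod_embeddings ℚ ℂ x
  have h2 : ∏ σ : K →ₐ[ℚ] ℂ, σ x = ∏ σ : K →+* ℂ, (σ x : ℂ) :=
    (Fintype.prod_equiv (RingHom.equivRatAlgHom _ _) _ _ (fun σ => rfl)).symm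
  have : ((Algebra.norm ℚ x : ℚ) : ℂ) = ((∏ σ : K →+* ℂ, (σ x).re : ℝ) : ℂ) := by
    rw [show ((Algebra.norm ℚ x : ℚ) : ℂ) = algebraMap ℚ ℂ (Algebra.norm ℚ x) by simp, h, h2]
    push_cast
    exact Finset.prod_congr rfl fun σ _ => wlr_ofReal hK σ x
  exact_mod_cast this

-- norm of elements via place products, for totally positive x

theorem wlr_abs_place (hK : ∀ σ : K →+* ℂ, ∀ x : K, (σ x).im = 0) (σ : K →+* ℂ) (x : K) :
    (mk σ) x = |(σ x).re| := by
  rw [apply, wlr_ofReal hK σ x]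
  simp [Complex.norm_real]

theorem wlr_tp_ne_zero {x : 𝓞 K} (hx : ∀ σ : K →+* ℂ, 0 < (σ (x : K)).re) :
    (x : K) ≠ 0 := by
  have : Nonempty (K →+* ℂ) := by
    rw [← Fintype.card_pos_iff, NumberField.Embeddings.card K ℂ]
    exact Module.finrank_pos
  obtain ⟨σ⟩ := this
  intro h
  have := hx σ
  rw [h, map_zero] at this
  simp at this

theorem wlr_norm_pos (hK : ∀ σ : K →+* ℂ, ∀ x : K, (σ x).im = 0) {x : 𝓞 K}
    (hx : ∀ σ : K →+* ℂ, 0 < (σ (x : K)).re) :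
    (0 : ℝ) < ((Algebra.norm ℤ x : ℤ) : ℝ) := by
  have : ((Algebra.norm ℤ x : ℤ) : ℝ) = ((Algebra.norm ℚ (x : K) : ℚ) : ℝ) := by
    rw [← Algebra.coe_norm_int]
    push_cast
    rfl
  rw [this, wlr_norm_eq_prod_re hK]
  exact Finset.prod_pos fun σ _ => hx σ

theorem wlr_prod_place_eq_norm (hK : ∀ σ : K →+* ℂ, ∀ x : K, (σ x).im = 0) {x : 𝓞 K}
    (hx : ∀ σ : K →+* ℂ, 0 < (σ (x : K)).re) :
    ∏ w : InfinitePlace K, w (x : K) = ((Algebra.norm ℤ x : ℤ) : ℝ) := by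
  have h1 := prod_eq_abs_norm (x : K)
  have hm : ∀ w : InfinitePlace K, mult w = 1 := fun w => if_pos (by
    rw [← mk_embedding w, isReal_mk_iff, ComplexEmbedding.isReal_iff]
    ext y
    exact Complex.conj_eq_iff_im.mpr (hK _ y))
  rw [Finset.prod_congr rfl (fun w _ => by rw [hm w, pow_one])] at h1
  have hz : (0 : ℤ) < Algebra.norm ℤ x := by exact_mod_cast wlr_norm_pos hK hx
  rw [h1]
  have habs : |Algebra.norm ℚ (x : K)| = ((Algebra.norm ℤ x : ℤ) : ℚ) := by
    rw [← Algebra.coe_norm_int]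
    exact abs_of_pos (by exact_mod_cast hz)
  rw [habs]
  push_cast
  rfl

theorem wlr_discr_nonneg (hK : ∀ σ : K →+* ℂ, ∀ x : K, (σ x).im = 0) :
    0 ≤ discr K := by
  classical
  let f : Module.Free.ChooseBasisIndex ℤ (𝓞 K) ≃ (K →+* ℂ) :=
    Fintype.equivOfCardEq (by
      rw [← Module.finrank_eq_card_chooseBasisIndex, RingOfIntegers.rank, Embeddings.card])
  let N := Algebra.embeddingsMatrixReindex ℚ ℂ (integralBasis K ∘ f.symm)
    (RingHom.equivRatAlgHom _ _)
  have hdet : ((discr K : ℚ) : ℂ) = N.det ^ 2 := by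
    rw [coe_discr, ← Algebra.discr_reindex (A := ℚ) (integralBasis K) f]
    rw [show ((Algebra.discr ℚ (integralBasis K ∘ f.symm) : ℚ) : ℂ)
        = algebraMap ℚ ℂ (Algebra.discr ℚ (integralBasis K ∘ f.symm)) by simp]
    exact Algebra.discr_eq_det_embeddingsMatrixReindex_pow_two ℚ ℂ _ (RingHom.equivRatAlgHom _ _)
  set M : Matrix (K →+* ℂ) (K →+* ℂ) ℝ := fun i j => (N i j).re with hM
  have hreal : N = M.map Complex.ofRealHom := by
    ext i j
    simp only [M, Matrix.map_apply]
    rw [← Complex.re_add_im (N i j)]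
    rw [show (N i j).im = 0 from ?_]
    · simp; rfl
    · simp only [N, Algebra.embeddingsMatrixReindex, Algebra.embeddingsMatrix,
        Matrix.reindex_apply, Matrix.submatrix_apply, Matrix.of_apply]
      exact hK _ _
  have h2 : ((discr K : ℚ) : ℝ) = M.det ^ 2 := by
    have : ((discr K : ℚ) : ℂ) = ((M.det ^ 2 : ℝ) : ℂ) := by
      rw [hdet, hreal]
      rw [show (M.map ⇑Complex.ofRealHom).det = Complex.ofRealHom M.det from
        (RingHom.map_det Complex.ofRealHom M).symm]
      push_cast
      rfl
    exact_mod_cast this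
  have : (0 : ℝ) ≤ ((discr K : ℚ) : ℝ) := h2 ▸ sq_nonneg _
  exact_mod_cast this

theorem wlr_minkowski (hK : ∀ σ : K →+* ℂ, ∀ x : K, (σ x).im = 0)
    {m : ℕ} (hm : 1 ≤ m) (γ : 𝓞 K) (hγ0 : (γ : K) ≠ 0)
    (hbig : |((discr K : ℚ) : ℝ)| ^ m < (∏ w : InfinitePlace K, w (γ : K)) ^ 2) :
    ∃ x : 𝓞 K, x ≠ 0 ∧ ∀ w : InfinitePlace K, (w (x : K)) ^ m < w (γ : K) := by
  classical
  have hwγ : ∀ w : InfinitePlace K, 0 < w (γ : K) := fun w => pos_iff.mpr hγ0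
  set f : InfinitePlace K → ℝ≥0 :=
    fun w => (Real.toNNReal (w (γ : K))) ^ ((m : ℝ)⁻¹) with hf
  set P : ℝ≥0 := ∏ w : InfinitePlace K, Real.toNNReal (w (γ : K)) with hP
  have hPpos : 0 < (P : ℝ) := by
    rw [hP]
    push_cast
    exact Finset.prod_pos fun w _ => by
      rw [Real.coe_toNNReal _ (hwγ w).le]; exact hwγ w
  have hmR : (m : ℝ) ≠ 0 := Nat.cast_ne_zero.mpr (by omega)
  -- the key volume inequality
  have hvol : minkowskiBound K ↑1 < volume (convexBodyLT K f) := by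
    rw [convexBodyLT_volume, minkowskiBound,
      volume_fundamentalDomain_fractionalIdealLatticeBasis,
      volume_fundamentalDomain_latticeBasis, mixedEmbedding.finrank, wlr_nrComplex hK]
    simp only [Units.val_one, FractionalIdeal.absNorm_one, Rat.cast_one,
      ENNReal.ofReal_one, one_mul, pow_zero]
    calc (NNReal.sqrt ‖discr K‖₊ : ℝ≥0∞) * 2 ^ Module.finrank ℚ K
        < (∏ w : InfinitePlace K, (f w : ℝ≥0∞) ^ mult w) * 2 ^ Module.finrank ℚ K := by
          refine ENNReal.mul_lt_mul_left (by positivity) (by simp) ?_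
          rw [show (∏ w : InfinitePlace K, (f w : ℝ≥0∞) ^ mult w)
              = ((∏ w : InfinitePlace K, f w ^ mult w : ℝ≥0) : ℝ≥0∞) by push_cast; rfl]
          rw [ENNReal.coe_lt_coe, ← NNReal.coe_lt_coe]
          have hsq : ((NNReal.sqrt ‖discr K‖₊ : ℝ≥0) : ℝ) = Real.sqrt |((discr K : ℚ) : ℝ)| := by
            rw [Real.coe_sqrt, coe_nnnorm, Int.norm_eq_abs]
            norm_cast
          have hprod : ((∏ w : InfinitePlace K, f w ^ mult w : ℝ≥0) : ℝ)
              = (P : ℝ) ^ ((m : ℝ)⁻¹) := by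
            rw [show (∏ w : InfinitePlace K, f w ^ mult w)
                = ∏ w : InfinitePlace K, f w by
              exact Finset.prod_congr rfl fun w _ => by rw [wlr_mult hK w, pow_one]]
            rw [hf, hP, NNReal.finset_prod_rpow, NNReal.coe_rpow]
          rw [hsq, hprod]
          set D := |((discr K : ℚ) : ℝ)| with hD
          have hD0 : 0 ≤ D := abs_nonneg _
          refine lt_of_pow_lt_pow_left₀ (2 * m) (by positivity) ?_
          have h1 : Real.sqrt D ^ (2 * m) = D ^ m := by
            rw [pow_mul, Real.sq_sqrt hD0]
          have h2 : ((P : ℝ) ^ ((m : ℝ)⁻¹)) ^ (2 * m) = (P : ℝ) ^ 2 := by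
            rw [← Real.rpow_natCast ((P : ℝ) ^ ((m : ℝ)⁻¹)) (2 * m),
              ← Real.rpow_mul hPpos.le]
            push_cast
            rw [show (m : ℝ)⁻¹ * (2 * (m : ℝ)) = 2 by field_simp]
            rw [Real.rpow_two]
          rw [h1, h2]
          convert hbig using 2
          · rfl
          rw [hP]
          push_cast
          exact Finset.prod_congr rfl fun w _ => Real.coe_toNNReal _ (hwγ w).le
      _ = _ := by
          have hfac : ((convexBodyLTFactor K : ℝ≥0) : ℝ≥0∞) = 2 ^ Module.finrank ℚ K := by
            rw [convexBodyLTFactor, wlr_nrComplex hK, wlr_nrReal hK]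
            push_cast
            simp
          rw [hfac, mul_comm]
          congr 1
          push_cast
          rfl
  obtain ⟨x, hx0, hxlt⟩ := exists_ne_zero_mem_ringOfIntegers_lt K hvol
  refine ⟨x, hx0, fun w => ?_⟩
  have h1 : w (x : K) < ((w (γ : K)) : ℝ) ^ ((m : ℝ)⁻¹) := by
    have := hxlt w
    rwa [hf, NNReal.coe_rpow, Real.coe_toNNReal _ (hwγ w).le] at this
  calc (w (x : K)) ^ m < (((w (γ : K)) : ℝ) ^ ((m : ℝ)⁻¹)) ^ m := by
        exact pow_lt_pow_left₀ h1 (AbsoluteValue.nonneg _ _) (by omega)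
    _ = w (γ : K) := by
        rw [← Real.rpow_natCast (((w (γ : K)) : ℝ) ^ ((m : ℝ)⁻¹)) m,
          ← Real.rpow_mul (hwγ w).le, inv_mul_cancel₀ hmR, Real.rpow_one]

theorem wlr_normZ_eq_prod (hK : ∀ σ : K →+* ℂ, ∀ x : K, (σ x).im = 0) (x : 𝓞 K) :
    ((Algebra.norm ℤ x : ℤ) : ℝ) = ∏ σ : K →+* ℂ, (σ (x : K)).re := by
  have h : ((Algebra.norm ℤ x : ℤ) : ℝ) = ((Algebra.norm ℚ ((x : 𝓞 K) : K) : ℚ) : ℝ) := by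
    rw [← Algebra.coe_norm_int]
    push_cast
    rfl
  rw [h, wlr_norm_eq_prod_re hK]

theorem wlr_descent (hK : ∀ σ : K →+* ℂ, ∀ x : K, (σ x).im = 0)
    {m : ℕ} (hm : 2 ≤ m) (hme : Even m) (γ : 𝓞 K)
    (hγ : ∀ σ : K →+* ℂ, 0 < (σ (γ : K)).re) :
    ∃ δ : 𝓞 K, (∀ σ : K →+* ℂ, 0 < (σ (δ : K)).re) ∧
      Algebra.norm ℤ δ ≤ |discr K| ^ (m / 2) ∧
      ∃ r : ℕ, ∃ β : Fin r → 𝓞 K, γ = δ + ∑ i, β i ^ m := by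
  have hemb : Nonempty (K →+* ℂ) := by
    rw [← Fintype.card_pos_iff, NumberField.Embeddings.card K ℂ]
    exact Module.finrank_pos
  suffices H : ∀ n : ℕ, ∀ γ : 𝓞 K, (∀ σ : K →+* ℂ, 0 < (σ (γ : K)).re) →
      (Algebra.norm ℤ γ).natAbs ≤ n →
      ∃ δ : 𝓞 K, (∀ σ : K →+* ℂ, 0 < (σ (δ : K)).re) ∧
        Algebra.norm ℤ δ ≤ |discr K| ^ (m / 2) ∧
        ∃ r : ℕ, ∃ β : Fin r → 𝓞 K, γ = δ + ∑ i, β i ^ m by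
    exact H _ γ hγ le_rfl
  intro n
  induction n with
  | zero =>
      intro γ hγ hn
      have h1 : (0 : ℝ) < ((Algebra.norm ℤ γ : ℤ) : ℝ) := wlr_norm_pos hK hγ
      have h2 : 0 < Algebra.norm ℤ γ := by exact_mod_cast h1
      omega
  | succ n ih =>
      intro γ hγ hn
      have hγ0 : (γ : K) ≠ 0 := wlr_tp_ne_zero hγ
      have hNpos : 0 < Algebra.norm ℤ γ := by exact_mod_cast wlr_norm_pos hK hγ
      by_cases hle : Algebra.norm ℤ γ ≤ |discr K| ^ (m / 2)
      · exact ⟨γ, hγ, hle, 0, (fun i => 0), by simp⟩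
      · push_neg at hle
        -- Minkowski hypothesis
        have hZbig : |discr K| ^ m < (Algebra.norm ℤ γ) ^ 2 := by
          have hDm : |discr K| ^ m = (|discr K| ^ (m / 2)) ^ 2 := by
            rw [← pow_mul, Nat.div_mul_cancel hme.two_dvd]
          rw [hDm]
          exact pow_lt_pow_left₀ hle (pow_nonneg (abs_nonneg _) _) (by norm_num)
        have hbig : |((discr K : ℚ) : ℝ)| ^ m
            < (∏ w : InfinitePlace K, w (γ : K)) ^ 2 := by
          rw [wlr_prod_place_eq_norm hK hγ]
          have : ((|discr K| ^ m : ℤ) : ℝ) < (((Algebra.norm ℤ γ) ^ 2 : ℤ) : ℝ) := by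
            exact_mod_cast hZbig
          convert this using 2 <;> push_cast <;> simp
        obtain ⟨x, hx0, hxlt⟩ := wlr_minkowski hK (by omega : 1 ≤ m) γ hγ0 hbig
        have hxK : (x : K) ≠ 0 := RingOfIntegers.coe_ne_zero_iff.mpr hx0
        set γ' : 𝓞 K := γ - x ^ m with hγ'def
        have hcoe : (γ' : K) = (γ : K) - (x : K) ^ m := by push_cast [hγ'def]; ring
        have key : ∀ σ : K →+* ℂ, 0 < (σ (γ' : K)).re ∧ (σ (γ' : K)).re < (σ (γ : K)).re := by
          intro σ
          have hre_pow : (σ ((x : K) ^ m)).re = ((σ (x : K)).re) ^ m := by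
            rw [map_pow, wlr_ofReal hK σ (x : K)]
            simp [← Complex.ofReal_pow]
          have hre' : (σ (γ' : K)).re = (σ (γ : K)).re - ((σ (x : K)).re) ^ m := by
            rw [hcoe, map_sub, Complex.sub_re, hre_pow]
          have haσ : (σ (x : K)).re ≠ 0 := by
            intro h
            apply hxK
            have := wlr_ofReal hK σ (x : K)
            rw [h] at this
            simp only [Complex.ofReal_zero] at this
            exact (map_eq_zero σ).mp this
          have hpowpos : 0 < ((σ (x : K)).re) ^ m := hme.pow_pos haσ
          have hlt : ((σ (x : K)).re) ^ m < (σ (γ : K)).re := by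
            have h1 := hxlt (mk σ)
            rw [wlr_abs_place hK σ (x : K), wlr_abs_place hK σ (γ : K),
              abs_of_pos (hγ σ), hme.pow_abs] at h1
            exact h1
          constructor
          · rw [hre']; linarith
          · rw [hre']; linarith
        have hγ'tp : ∀ σ : K →+* ℂ, 0 < (σ (γ' : K)).re := fun σ => (key σ).1
        have hNlt : Algebra.norm ℤ γ' < Algebra.norm ℤ γ := by
          have : ((Algebra.norm ℤ γ' : ℤ) : ℝ) < ((Algebra.norm ℤ γ : ℤ) : ℝ) := by
            rw [wlr_normZ_eq_prod hK, wlr_normZ_eq_prod hK]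
            refine Finset.prod_lt_prod_of_nonempty ?_ ?_ Finset.univ_nonempty
            · exact fun σ _ => (key σ).1
            · exact fun σ _ => (key σ).2
          exact_mod_cast this
        have hN'pos : 0 < Algebra.norm ℤ γ' := by exact_mod_cast wlr_norm_pos hK hγ'tp
        obtain ⟨δ, hδtp, hδnorm, r, β, hrep⟩ := ih γ' hγ'tp (by omega)
        refine ⟨δ, hδtp, hδnorm, r + 1, Fin.cons x β, ?_⟩
        have hsum : ∑ i : Fin (r + 1), (Fin.cons x β : Fin (r+1) → 𝓞 K) i ^ m
            = x ^ m + ∑ i : Fin r, β i ^ m := by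
          rw [Fin.sum_univ_succ]
          simp
        rw [hsum, show γ = γ' + x ^ m by rw [hγ'def]; ring, hrep]
        ring

theorem wlr_S (hK : ∀ σ : K →+* ℂ, ∀ x : K, (σ x).im = 0)
    {m : ℕ} (hm : 2 ≤ m) :
    ∃ S : Finset (𝓞 K),
      (∀ α ∈ S, (∀ σ : K →+* ℂ, 0 < (σ (α : K)).re) ∧
        Algebra.norm ℤ α ≤ |discr K| ^ (m / 2)) ∧
      ∀ δ : 𝓞 K, (∀ σ : K →+* ℂ, 0 < (σ (δ : K)).re) →
        Algebra.norm ℤ δ ≤ |discr K| ^ (m / 2) →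
        ∃ α ∈ S, ∃ u : 𝓞 K, δ = α * u ^ m := by
  classical
  set B : ℤ := |discr K| ^ (m / 2) with hB
  let A := {a : 𝓞 K // (∀ σ : K →+* ℂ, 0 < (σ (a : K)).re) ∧ Algebra.norm ℤ a ≤ B}
  let s : Setoid A :=
    { r := fun a b => ∃ v : (𝓞 K)ˣ, (b : 𝓞 K) = (a : 𝓞 K) * (v : 𝓞 K) ^ m
      iseqv := by
        refine ⟨fun a => ⟨1, by simp⟩, ?_, ?_⟩
        · rintro a b ⟨v, hv⟩
          refine ⟨v⁻¹, ?_⟩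
          rw [hv, mul_assoc, ← mul_pow, ← Units.val_mul]
          simp
        · rintro a b c ⟨v, hv⟩ ⟨w, hw⟩
          refine ⟨v * w, ?_⟩
          rw [hw, hv, mul_assoc, ← mul_pow, ← Units.val_mul] }
  let H : Subgroup (𝓞 K)ˣ := (powMonoidHom m : (𝓞 K)ˣ →* (𝓞 K)ˣ).range
  let Q := (𝓞 K)ˣ ⧸ H
  haveI hQfin : Finite Q := by
    haveI : Group.FG (𝓞 K)ˣ := Group.fg_iff_monoid_fg.mpr inferInstance
    haveI : Group.FG Q := Group.fg_of_surjective (QuotientGroup.mk'_surjective H)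
    refine CommGroup.finite_of_fg_torsion _ ?_
    intro g
    obtain ⟨u, rfl⟩ := QuotientGroup.mk'_surjective H g
    refine isOfFinOrder_iff_pow_eq_one.mpr ⟨m, by omega, ?_⟩
    rw [← map_pow, QuotientGroup.mk'_apply, QuotientGroup.eq_one_iff]
    exact ⟨u, rfl⟩
  have hTfin : {I : Ideal (𝓞 K) | Ideal.absNorm I ≤ B.toNat}.Finite :=
    Ideal.finite_setOf_absNorm_le B.toNat
  haveI := hTfin.to_subtype
  have hA0 : ∀ a : A, ((a : 𝓞 K) : K) ≠ 0 := fun a => wlr_tp_ne_zero a.2.1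
  have hA0' : ∀ a : A, (a : 𝓞 K) ≠ 0 := by
    intro a h
    exact hA0 a (by rw [h]; simp)
  have hspan_mem : ∀ a : A,
      Ideal.span {(a : 𝓞 K)} ∈ {I : Ideal (𝓞 K) | Ideal.absNorm I ≤ B.toNat} := by
    intro a
    have hpos : (0 : ℝ) < ((Algebra.norm ℤ (a : 𝓞 K) : ℤ) : ℝ) := wlr_norm_pos hK a.2.1
    have hpos' : 0 < Algebra.norm ℤ (a : 𝓞 K) := by exact_mod_cast hpos
    have hle := a.2.2
    simp only [Set.mem_setOf_eq, Ideal.absNorm_span_singleton]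
    omega
  let gen : Ideal (𝓞 K) → 𝓞 K := fun I =>
    if h : ∃ b : A, Ideal.span {(b : 𝓞 K)} = I then ((h.choose : A) : 𝓞 K) else 0
  have hgen : ∀ a : A, Associated (gen (Ideal.span {(a : 𝓞 K)})) (a : 𝓞 K) := by
    intro a
    have h : ∃ b : A, Ideal.span {(b : 𝓞 K)} = Ideal.span {(a : 𝓞 K)} := ⟨a, rfl⟩
    simp only [gen, dif_pos h]
    exact Ideal.span_singleton_eq_span_singleton.mp h.choose_spec
  let cu : A → (𝓞 K)ˣ := fun a => (hgen a).choose
  have hcu : ∀ a : A, gen (Ideal.span {(a : 𝓞 K)}) * ((cu a : (𝓞 K)ˣ) : 𝓞 K) = (a : 𝓞 K) :=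
    fun a => (hgen a).choose_spec
  have hgen_ne : ∀ a : A, gen (Ideal.span {(a : 𝓞 K)}) ≠ 0 := by
    intro a h
    have h2 := hcu a
    rw [h, zero_mul] at h2
    exact hA0' a h2.symm
  let f : A → ↥{I : Ideal (𝓞 K) | Ideal.absNorm I ≤ B.toNat} × Q :=
    fun a => (⟨Ideal.span {(a : 𝓞 K)}, hspan_mem a⟩, QuotientGroup.mk (cu a))
  have hwd : ∀ a b : A, s.r a b → f a = f b := by
    rintro a b ⟨v, hv⟩
    have hsp : Ideal.span {(a : 𝓞 K)} = Ideal.span {(b : 𝓞 K)} := by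
      rw [Ideal.span_singleton_eq_span_singleton]
      exact ⟨v ^ m, by rw [hv, Units.val_pow_eq_pow_val]⟩
    have hcub : cu b = cu a * v ^ m := by
      apply Units.ext
      have h1 := hcu a
      have h2 := hcu b
      rw [← hsp] at h2
      apply mul_left_cancel₀ (hgen_ne a)
      calc gen (Ideal.span {(a : 𝓞 K)}) * ((cu b : (𝓞 K)ˣ) : 𝓞 K) = (b : 𝓞 K) := h2
        _ = (a : 𝓞 K) * ((v : 𝓞 K)) ^ m := hv
        _ = (gen (Ideal.span {(a : 𝓞 K)}) * ((cu a : (𝓞 K)ˣ) : 𝓞 K)) * ((v : 𝓞 K)) ^ m := by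
            rw [h1]
        _ = gen (Ideal.span {(a : 𝓞 K)}) * (((cu a * v ^ m : (𝓞 K)ˣ) : 𝓞 K)) := by
            push_cast
            ring
    simp only [f, Prod.mk.injEq, Subtype.mk.injEq]
    refine ⟨hsp, ?_⟩
    rw [hcub]
    have hmem : v ^ m ∈ H := ⟨v, rfl⟩
    exact (QuotientGroup.mk_mul_of_mem (cu a) hmem).symm
  haveI hfinq : Finite (Quotient s) := by
    refine Finite.of_injective (Quotient.lift f hwd) ?_
    intro q1 q2
    refine Quotient.inductionOn₂ q1 q2 ?_
    intro a b hab
    simp only [Quotient.lift_mk, f, Prod.mk.injEq, Subtype.mk.injEq] at hab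
    obtain ⟨hsp, hq⟩ := hab
    rw [QuotientGroup.eq] at hq
    obtain ⟨w, hw⟩ := hq
    have hw' : w ^ m = (cu a)⁻¹ * cu b := hw
    apply Quotient.sound
    refine ⟨w, ?_⟩
    have h1 := hcu a
    have h2 := hcu b
    rw [← hsp] at h2
    have hcub : cu b = cu a * w ^ m := by
      rw [hw']
      group
    calc (b : 𝓞 K) = gen (Ideal.span {(a : 𝓞 K)}) * ((cu b : (𝓞 K)ˣ) : 𝓞 K) := h2.symm
      _ = gen (Ideal.span {(a : 𝓞 K)}) * (((cu a * w ^ m : (𝓞 K)ˣ) : 𝓞 K)) := by rw [hcub]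
      _ = (gen (Ideal.span {(a : 𝓞 K)}) * ((cu a : (𝓞 K)ˣ) : 𝓞 K)) * ((w : 𝓞 K)) ^ m := by
          push_cast
          ring
      _ = (a : 𝓞 K) * ((w : 𝓞 K)) ^ m := by rw [h1]
  haveI : Fintype (Quotient s) := Fintype.ofFinite _
  refine ⟨Finset.image (fun q : Quotient s => ((Quotient.out q : A) : 𝓞 K)) Finset.univ, ?_, ?_⟩
  · intro α hα
    rw [Finset.mem_image] at hα
    obtain ⟨q, -, rfl⟩ := hα
    exact (Quotient.out q).2
  · intro δ hδ1 hδ2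
    let a : A := ⟨δ, hδ1, hδ2⟩
    refine ⟨((Quotient.mk s a).out : A), Finset.mem_image_of_mem _ (Finset.mem_univ _), ?_⟩
    have hrel : s.r (Quotient.mk s a).out a := Quotient.exact (Quotient.out_eq _)
    obtain ⟨v, hv⟩ := hrel
    exact ⟨(v : 𝓞 K), hv⟩

end WLRAux

open NumberField

theorem waring_like_representation
    (m : ℕ) (hm : 2 ≤ m) (hme : Even m)
    (K : Type*) [Field K] [NumberField K]
    -- K is totally real
    (hK : ∀ σ : K →+* ℂ, ∀ x : K, (σ x).im = 0) :
    ∃ S : Finset (𝓞 K),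
      -- S consists of totally positive integers of norm at most Δ^{m/2}
      (∀ α ∈ S, (∀ σ : K →+* ℂ, 0 < (σ (α : K)).re) ∧
        Algebra.norm ℚ (α : K) ≤ ((discr K : ℚ)) ^ (m / 2)) ∧
      -- every totally positive γ ∈ O_K is of the form α·x^m + β₁^m + ⋯ + β_r^m
      ∀ γ : 𝓞 K, (∀ σ : K →+* ℂ, 0 < (σ (γ : K)).re) →
        ∃ α ∈ S, ∃ x : 𝓞 K, ∃ r : ℕ, ∃ β : Fin r → 𝓞 K,
          γ = α * x ^ m + ∑ i, (β i) ^ m := by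
  obtain ⟨S, hS1, hS2⟩ := wlr_S hK hm
  refine ⟨S, ?_, ?_⟩
  · intro α hα
    refine ⟨(hS1 α hα).1, ?_⟩
    have h2 := (hS1 α hα).2
    have hd : |discr K| = discr K := abs_of_nonneg (wlr_discr_nonneg hK)
    rw [← Algebra.coe_norm_int]
    have h3 : (Algebra.norm ℤ α : ℤ) ≤ (discr K) ^ (m / 2) := by rw [← hd]; exact h2
    calc ((Algebra.norm ℤ α : ℤ) : ℚ) ≤ (((discr K) ^ (m / 2) : ℤ) : ℚ) := by exact_mod_cast h3
      _ = (discr K : ℚ) ^ (m / 2) := by push_cast; rfl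
  · intro γ hγ
    obtain ⟨δ, hδtp, hδn, r, β, hrep⟩ := wlr_descent hK hm hme γ hγ
    obtain ⟨α, hαS, u, hu⟩ := hS2 δ hδtp hδn
    exact ⟨α, hαS, u, r, β, by rw [hrep, hu]⟩
end

section
/- Let n ≥ 1 and let m ≥ 2 be even, K a totally real number field, O an order in K, and f ∈ K[x₁,…,xₙ] a totally positive definite homogeneous polynomial of degree m. Then there exists a positive integer C such that for every nonzero vector v = (γ₁,…,γₙ) ∈ Oⁿ, the element C·f(v) − (γ₁² + γ₂² + ⋯ + γₙ²)^{m/2} of K is totally positive. -/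
open MvPolynomial

private lemma eval_smul_of_isHomogeneous {n m : ℕ} {φ : MvPolynomial (Fin n) ℝ}
    (h : φ.IsHomogeneous m) (t : ℝ) (x : Fin n → ℝ) :
    eval (t • x) φ = t ^ m * eval x φ := by
  rw [eval_eq, eval_eq, Finset.mul_sum]
  refine Finset.sum_congr rfl fun d hd => ?_
  have hdeg : Finsupp.weight 1 d = m := h (mem_support_iff.mp hd)
  have hdeg' : ∑ i ∈ d.support, d i = m := by
    rw [← hdeg]
    simp [Finsupp.weight_apply, Finsupp.sum]
  calc coeff d φ * ∏ i ∈ d.support, (t • x) i ^ d i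
      = coeff d φ * ∏ i ∈ d.support, (t ^ d i * x i ^ d i) := by
        simp [mul_pow, Pi.smul_apply, smul_eq_mul]
    _ = coeff d φ * ((∏ i ∈ d.support, t ^ d i) * ∏ i ∈ d.support, x i ^ d i) := by
        rw [Finset.prod_mul_distrib]
    _ = t ^ m * (coeff d φ * ∏ i ∈ d.support, x i ^ d i) := by
        rw [Finset.prod_pow_eq_pow_sum, hdeg']; ring

theorem totally_positive_definite_lower_bound
    (n m : ℕ) (hn : 1 ≤ n) (hm : 2 ≤ m) (hme : Even m)
    (K : Type*) [Field K] [NumberField K]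
    -- K is totally real
    (hK : ∀ σ : K →+* ℂ, ∀ x : K, (σ x).im = 0)
    -- O is an order in K
    (O : Subalgebra ℤ K)
    (hOint : ∀ x ∈ O, IsIntegral ℤ x)
    (hOfrac : ∀ x : K, ∃ a ∈ O, ∃ b ∈ O, b ≠ 0 ∧ x = a / b)
    (f : MvPolynomial (Fin n) K) (hf : f.IsHomogeneous m)
    -- f is totally positive definite
    (hpd : ∀ σ : K →+* ℝ, ∀ x : Fin n → ℝ, x ≠ 0 → 0 < eval x (map σ f)) :
    ∃ C : ℕ, 0 < C ∧
      ∀ v : Fin n → K, (∀ i, v i ∈ O) → v ≠ 0 →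
        -- C·f(v) − (γ₁² + ⋯ + γₙ²)^{ m/2 } is totally positive
        ∀ σ : K →+* ℂ,
          0 < (σ ((C : K) * eval v f - (∑ i, v i ^ 2) ^ (m / 2))).re := by
  have hm2 : m / 2 * 2 = m := Nat.div_mul_cancel hme.two_dvd
  -- For each real embedding, a constant works by compactness
  have key : ∀ τ : K →+* ℝ, ∃ C : ℕ, ∀ x : Fin n → ℝ, x ≠ 0 →
      (∑ i, x i ^ 2) ^ (m / 2) < (C : ℝ) * eval x (map τ f) := by
    intro τ
    have hnt : Nontrivial (Fin n → ℝ) := by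
      haveI : NeZero n := ⟨by omega⟩
      infer_instance
    set S : Set (Fin n → ℝ) := Metric.sphere 0 1 with hS
    have hSc : IsCompact S := isCompact_sphere 0 1
    have hSne : S.Nonempty := NormedSpace.sphere_nonempty.mpr zero_le_one
    have hFcont : Continuous fun x : Fin n → ℝ => eval x (map τ f) :=
      MvPolynomial.continuous_eval _
    have hGcont : Continuous fun x : Fin n → ℝ => (∑ i, x i ^ 2) ^ (m / 2) := by
      fun_prop
    obtain ⟨u, huS, humin⟩ := hSc.exists_isMinOn hSne hFcont.continuousOn
    obtain ⟨w, hwS, hwmax⟩ := hSc.exists_isMaxOn hSne hGcont.continuousOn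
    set c : ℝ := eval u (map τ f) with hc
    set M : ℝ := (∑ i, w i ^ 2) ^ (m / 2) with hM
    have hu0 : u ≠ 0 := by
      intro h
      rw [h] at huS
      simp [hS] at huS
    have hcpos : 0 < c := hpd τ u hu0
    obtain ⟨C, hC⟩ := exists_nat_gt (M / c)
    have hMC : M < C * c := (div_lt_iff₀ hcpos).mp hC
    refine ⟨C, fun x hx => ?_⟩
    set t : ℝ := ‖x‖ with ht
    have htpos : 0 < t := norm_pos_iff.mpr hx
    set y : Fin n → ℝ := t⁻¹ • x with hy
    have hyS : y ∈ S := by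
      rw [hS, mem_sphere_zero_iff_norm, hy, norm_smul]
      simp [ht, norm_inv, inv_mul_cancel₀ htpos.ne', inv_mul_cancel₀ (norm_ne_zero_iff.mpr hx)]
    have hxy : x = t • y := by
      rw [hy, smul_smul, mul_inv_cancel₀ htpos.ne', one_smul]
    have hy0 : y ≠ 0 := by
      intro h
      apply hx
      rw [hxy, h, smul_zero]
    -- eval on x
    have hFx : eval x (map τ f) = t ^ m * eval y (map τ f) := by
      rw [hxy]; exact eval_smul_of_isHomogeneous (hf.map τ) t y
    have hGx : (∑ i, x i ^ 2) ^ (m / 2) = t ^ m * (∑ i, y i ^ 2) ^ (m / 2) := by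
      have : ∑ i, x i ^ 2 = t ^ 2 * ∑ i, y i ^ 2 := by
        rw [hxy, Finset.mul_sum]
        refine Finset.sum_congr rfl fun i _ => ?_
        simp [Pi.smul_apply, smul_eq_mul, mul_pow]
      rw [this, mul_pow, ← pow_mul]
      rw [show 2 * (m / 2) = m by omega]
    have htm : 0 < t ^ m := pow_pos htpos m
    have h1 : (∑ i, y i ^ 2) ^ (m / 2) ≤ M := hwmax hyS
    have h2 : c ≤ eval y (map τ f) := humin hyS
    calc (∑ i, x i ^ 2) ^ (m / 2) = t ^ m * (∑ i, y i ^ 2) ^ (m / 2) := hGx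
      _ ≤ t ^ m * M := by exact mul_le_mul_of_nonneg_left h1 htm.le
      _ < t ^ m * ((C : ℝ) * c) := by exact mul_lt_mul_of_pos_left hMC htm
      _ ≤ t ^ m * ((C : ℝ) * eval y (map τ f)) := by
          refine mul_le_mul_of_nonneg_left ?_ htm.le
          exact mul_le_mul_of_nonneg_left h2 (Nat.cast_nonneg C)
      _ = (C : ℝ) * eval x (map τ f) := by rw [hFx]; ring
  choose Cf hCf using key
  refine ⟨(Finset.univ.sup Cf) + 1, Nat.succ_pos _, fun v hvO hv0 σ => ?_⟩
  set CC : ℕ := (Finset.univ.sup Cf) + 1 with hCC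
  -- σ is a real embedding
  have hσ : NumberField.ComplexEmbedding.IsReal σ := by
    rw [NumberField.ComplexEmbedding.isReal_iff]
    ext x
    exact Complex.conj_eq_iff_im.mpr (hK σ x)
  set τ : K →+* ℝ := hσ.embedding with hτ
  have hτσ : ∀ x : K, (σ x).re = τ x := by
    intro x
    rw [← hσ.coe_embedding_apply x, Complex.ofReal_re]
  rw [hτσ]
  have hτv : (fun i => τ (v i)) ≠ 0 := by
    intro h
    apply hv0
    funext i
    have : τ (v i) = 0 := congrFun h i
    exact τ.injective (by simpa using this)
  have heval : τ (eval v f) = eval (fun i => τ (v i)) (map τ f) := by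
    rw [MvPolynomial.eval_map]
    calc τ (eval v f) = τ (eval₂ (RingHom.id K) v f) := rfl
      _ = eval₂ (τ.comp (RingHom.id K)) (fun i => τ (v i)) f :=
          MvPolynomial.eval₂_comp_left τ (RingHom.id K) v f
      _ = eval₂ τ (fun i => τ (v i)) f := by rw [RingHom.comp_id]
  have hmain := hCf τ (fun i => τ (v i)) hτv
  have hFpos : 0 < eval (fun i => τ (v i)) (map τ f) := hpd τ _ hτv
  have hle : ((Cf τ : ℝ)) * eval (fun i => τ (v i)) (map τ f) ≤
      (CC : ℝ) * eval (fun i => τ (v i)) (map τ f) := by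
    refine mul_le_mul_of_nonneg_right ?_ hFpos.le
    exact_mod_cast Nat.le_succ_of_le (Finset.le_sup (Finset.mem_univ τ))
  have hfinal : (∑ i, τ (v i) ^ 2) ^ (m / 2) < (CC : ℝ) * eval (fun i => τ (v i)) (map τ f) :=
    lt_of_lt_of_le hmain hle
  have hτexpr : τ ((CC : K) * eval v f - (∑ i, v i ^ 2) ^ (m / 2)) =
      (CC : ℝ) * eval (fun i => τ (v i)) (map τ f) - (∑ i, τ (v i) ^ 2) ^ (m / 2) := by
    rw [map_sub, map_mul, map_natCast, map_pow, map_sum, heval]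
    simp [map_pow]
  rw [hτexpr]
  linarith
end

section
/- Let n ≥ 1 and let m ≥ 2 be even, K a totally real number field, O an order in K, and f ∈ K[x₁,…,xₙ] a totally positive definite homogeneous polynomial of degree m. Then there exists a positive integer C such that for every vector v ∈ Oⁿ one has house(v)^m ≤ C · house(f(v)). -/
open MvPolynomial

lemma my_eval_smul {n m : ℕ} (g : MvPolynomial (Fin n) ℝ) (hg : g.IsHomogeneous m)
    (c : ℝ) (x : Fin n → ℝ) : eval (c • x) g = c ^ m * eval x g := by
  rw [eval_eq, eval_eq, Finset.mul_sum]
  refine Finset.sum_congr rfl fun d hd => ?_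
  have h1 : ∑ i ∈ d.support, d i = m := by
    have := hg (mem_support_iff.mp hd)
    rw [Pi.one_def, ← Finsupp.degree_eq_weight_one] at this
    exact this
  calc coeff d g * ∏ i ∈ d.support, (c • x) i ^ d i
      = coeff d g * ∏ i ∈ d.support, (c ^ d i * x i ^ d i) := by
        simp [Pi.smul_apply, smul_eq_mul, mul_pow]
    _ = coeff d g * ((∏ i ∈ d.support, c ^ d i) * ∏ i ∈ d.support, x i ^ d i) := by
        rw [Finset.prod_mul_distrib]
    _ = c ^ m * (coeff d g * ∏ i ∈ d.support, x i ^ d i) := by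
        rw [Finset.prod_pow_eq_pow_sum, h1]; ring

lemma my_lower_bound {n m : ℕ} (hn : 1 ≤ n) (hm : 2 ≤ m) (g : MvPolynomial (Fin n) ℝ)
    (hg : g.IsHomogeneous m) (hpos : ∀ x : Fin n → ℝ, x ≠ 0 → 0 < eval x g) :
    ∃ ε > 0, ∀ x : Fin n → ℝ, ε * ‖x‖ ^ m ≤ eval x g := by
  have : Nonempty (Fin n) := ⟨⟨0, hn⟩⟩
  have hsc : IsCompact (Metric.sphere (0 : Fin n → ℝ) 1) := isCompact_sphere _ _
  have hsne : (Metric.sphere (0 : Fin n → ℝ) 1).Nonempty := by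
    refine ⟨fun _ => 1, ?_⟩
    rw [mem_sphere_zero_iff_norm]
    simp [pi_norm_const]
  obtain ⟨x₀, hx₀mem, hx₀min⟩ :=
    hsc.exists_isMinOn hsne (MvPolynomial.continuous_eval g).continuousOn
  have hx₀norm : ‖x₀‖ = 1 := mem_sphere_zero_iff_norm.mp hx₀mem
  have hx₀ne : x₀ ≠ 0 := fun h => by simp [h] at hx₀norm
  refine ⟨eval x₀ g, hpos x₀ hx₀ne, fun x => ?_⟩
  by_cases hx : x = 0
  · have h0 : coeff 0 g = 0 := hg.coeff_eq_zero (by simp [Finsupp.degree]; omega)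
    subst hx
    rw [MvPolynomial.eval_zero, MvPolynomial.constantCoeff_eq, h0]
    simp [zero_pow (by omega : m ≠ 0)]
  · have hc : (0:ℝ) < ‖x‖ := norm_pos_iff.mpr hx
    set y : Fin n → ℝ := ‖x‖⁻¹ • x with hy
    have hyn : ‖y‖ = 1 := by
      rw [hy, norm_smul, norm_inv, norm_norm, inv_mul_cancel₀ hc.ne']
    have hxy : x = ‖x‖ • y := by
      rw [hy, smul_smul, mul_inv_cancel₀ hc.ne', one_smul]
    have hev : eval x g = ‖x‖ ^ m * eval y g := by
      have h2 := my_eval_smul g hg ‖x‖ y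
      rw [← hxy] at h2
      exact h2
    calc eval x₀ g * ‖x‖ ^ m ≤ eval y g * ‖x‖ ^ m := by
          gcongr
          exact hx₀min (mem_sphere_zero_iff_norm.mpr hyn)
      _ = eval x g := by rw [hev]; ring

/-- The house of an algebraic number `α`: the maximum of `|σ(α)|` over the
embeddings `σ` into `ℂ` (for an element of a field `K` of algebraic numbers, the
embeddings of `K` restrict to exactly the embeddings of `ℚ(α)`, giving the same
set of values). -/
noncomputable def house' {K : Type*} [Field K] (α : K) : ℝ :=
  ⨆ σ : K →+* ℂ, ‖σ α‖

theorem house_pow_le_mul_house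
    (n m : ℕ) (hn : 1 ≤ n) (hm : 2 ≤ m) (hme : Even m)
    (K : Type*) [Field K] [NumberField K]
    -- K is totally real
    (hK : ∀ σ : K →+* ℂ, ∀ x : K, (σ x).im = 0)
    -- O is an order in K
    (O : Subalgebra ℤ K)
    (hOint : ∀ x ∈ O, IsIntegral ℤ x)
    (hOfrac : ∀ x : K, ∃ a ∈ O, ∃ b ∈ O, b ≠ 0 ∧ x = a / b)
    (f : MvPolynomial (Fin n) K) (hf : f.IsHomogeneous m)
    -- f is totally positive definite
    (hpd : ∀ σ : K →+* ℝ, ∀ x : Fin n → ℝ, x ≠ 0 → 0 < eval x (map σ f)) :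
    ∃ C : ℕ, 0 < C ∧
      ∀ v : Fin n → K, (∀ i, v i ∈ O) →
        (⨆ i, house' (v i)) ^ m ≤ (C : ℝ) * house' (eval v f) := by
  have hnefin : Nonempty (Fin n) := ⟨⟨0, hn⟩⟩
  have hneemb : Nonempty (K →+* ℂ) := inferInstance
  -- every complex embedding is real
  have hreal : ∀ σ : K →+* ℂ, NumberField.ComplexEmbedding.IsReal σ := by
    intro σ
    rw [NumberField.ComplexEmbedding.isReal_iff]
    ext x
    exact Complex.conj_eq_iff_im.mpr (hK σ x)
  set τ : (K →+* ℂ) → (K →+* ℝ) := fun σ => (hreal σ).embedding with hτdef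
  have hτ : ∀ σ x, ((τ σ x : ℝ) : ℂ) = σ x := fun σ x =>
    (hreal σ).coe_embedding_apply x
  -- per-embedding lower bound
  have hkey : ∀ σ : K →+* ℂ, ∃ ε > 0, ∀ x : Fin n → ℝ,
      ε * ‖x‖ ^ m ≤ eval x (map (τ σ) f) :=
    fun σ => my_lower_bound hn hm _ (hf.map _) (hpd (τ σ))
  choose ε hεpos hεle using hkey
  obtain ⟨σm, -, hσm⟩ := Finset.exists_min_image Finset.univ ε
    ⟨Classical.arbitrary _, Finset.mem_univ _⟩
  have hε0 : 0 < ε σm := hεpos _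
  refine ⟨⌈(ε σm)⁻¹⌉₊ + 1, Nat.succ_pos _, fun v hv => ?_⟩
  have habs_le_house : ∀ (α : K) (σ : K →+* ℂ), ‖σ α‖ ≤ house' α :=
    fun α σ => le_ciSup (f := fun σ : K →+* ℂ => ‖σ α‖) (Set.Finite.bddAbove (Set.finite_range _)) σ
  have hhouse_nonneg : ∀ α : K, 0 ≤ house' α := fun α =>
    le_trans (norm_nonneg _) (habs_le_house α (Classical.arbitrary _))
  obtain ⟨i₀, hi₀⟩ := exists_eq_ciSup_of_finite (f := fun i => house' (v i))
  obtain ⟨σ₀, hσ₀⟩ := exists_eq_ciSup_of_finite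
    (f := fun σ : K →+* ℂ => ‖σ (v i₀)‖)
  set x : Fin n → ℝ := fun i => τ σ₀ (v i) with hxdef
  have habs : ∀ i, ‖σ₀ (v i)‖ = |x i| := fun i => by
    rw [← hτ σ₀ (v i), Complex.norm_real, Real.norm_eq_abs]
  have hSup : (⨆ i, house' (v i)) = |x i₀| := by
    rw [← hi₀, show house' (v i₀) = ⨆ σ : K →+* ℂ, ‖σ (v i₀)‖ from rfl,
      ← hσ₀, habs i₀]
  have heval : eval x (map (τ σ₀) f) = τ σ₀ (eval v f) := by
    rw [MvPolynomial.eval_map]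
    have h := MvPolynomial.eval₂_comp_left (τ σ₀) (RingHom.id K) v f
    simp only [MvPolynomial.eval₂_id, RingHom.comp_id] at h
    exact h.symm
  by_cases hx0 : x = 0
  · have hxi : x i₀ = 0 := by rw [hx0]; rfl
    rw [hSup, hxi, abs_zero, zero_pow (by omega : m ≠ 0)]
    exact mul_nonneg (by positivity) (hhouse_nonneg _)
  · have h1 : ε σm * ‖x‖ ^ m ≤ eval x (map (τ σ₀) f) := by
      refine le_trans ?_ (hεle σ₀ x)
      gcongr
      exact hσm σ₀ (Finset.mem_univ _)
    have h2 : eval x (map (τ σ₀) f) ≤ house' (eval v f) := by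
      rw [heval]
      calc τ σ₀ (eval v f) ≤ |τ σ₀ (eval v f)| := le_abs_self _
        _ = ‖σ₀ (eval v f)‖ := by
            rw [← hτ σ₀ (eval v f), Complex.norm_real, Real.norm_eq_abs]
        _ ≤ house' (eval v f) := habs_le_house _ _
    have h3 : |x i₀| ≤ ‖x‖ := by
      simpa [Real.norm_eq_abs] using norm_le_pi_norm x i₀
    rw [hSup]
    have hC : (ε σm)⁻¹ ≤ ((⌈(ε σm)⁻¹⌉₊ + 1 : ℕ) : ℝ) := by
      push_cast
      linarith [Nat.le_ceil (ε σm)⁻¹]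
    calc |x i₀| ^ m ≤ ‖x‖ ^ m := by gcongr
      _ = (ε σm)⁻¹ * (ε σm * ‖x‖ ^ m) := by field_simp
      _ ≤ (ε σm)⁻¹ * house' (eval v f) := by
          have h12 := h1.trans h2
          gcongr
      _ ≤ ((⌈(ε σm)⁻¹⌉₊ + 1 : ℕ) : ℝ) * house' (eval v f) := by
          gcongr
          exact hhouse_nonneg _
end

section
/- Let n ≥ 1, let m ≥ 2 be even, let K be a totally real algebraic extension of ℚ (possibly of infinite degree), let O be an order in K, let f ∈ K[x₁,…,xₙ] be a totally positive definite homogeneous polynomial of degree m, and let Λ ⊆ Kⁿ be a finitely generated O-submodule. Then there exists a positive integer κ such that for every v ∈ Λ one has house(v)^m ≤ κ · house(f(v)). -/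
open MvPolynomial

section Aux

variable {K : Type*} [Field K] [CharZero K] [Algebra.IsAlgebraic ℚ K]

lemma emb_nonempty : Nonempty (K →+* ℂ) :=
  ⟨(IsAlgClosed.lift : K →ₐ[ℚ] ℂ).toRingHom⟩

lemma emb_mem_rootSet (σ : K →+* ℂ) (α : K) : σ α ∈ (minpoly ℚ α).rootSet ℂ := by
  have hi : IsIntegral ℚ α := (Algebra.IsAlgebraic.isAlgebraic α).isIntegral
  rw [Polynomial.mem_rootSet]
  refine ⟨minpoly.ne_zero hi, ?_⟩
  have h := Polynomial.aeval_algHom_apply σ.toRatAlgHom α (minpoly ℚ α)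
  rw [minpoly.aeval, map_zero] at h
  exact h

lemma emb_range_bdd (α : K) :
    BddAbove (Set.range fun σ : K →+* ℂ => ‖σ α‖) := by
  have hfin : ((minpoly ℚ α).rootSet ℂ).Finite := (minpoly ℚ α).rootSet_finite ℂ
  have : (Set.range fun σ : K →+* ℂ => ‖σ α‖) ⊆
      (fun z : ℂ => ‖z‖) '' ((minpoly ℚ α).rootSet ℂ) := by
    rintro x ⟨σ, rfl⟩
    exact ⟨σ α, emb_mem_rootSet σ α, rfl⟩
  exact ((hfin.image _).subset this).bddAbove

lemma le_house' (σ : K →+* ℂ) (α : K) : ‖σ α‖ ≤ house' α :=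
  le_ciSup (emb_range_bdd α) σ

lemma house'_nonneg (α : K) : 0 ≤ house' α := by
  obtain ⟨σ⟩ := (emb_nonempty (K := K))
  exact le_trans (norm_nonneg _) (le_house' σ α)

lemma house'_le {α : K} {B : ℝ} (h : ∀ σ : K →+* ℂ, ‖σ α‖ ≤ B) :
    house' α ≤ B := by
  have : Nonempty (K →+* ℂ) := emb_nonempty
  exact ciSup_le h

/-- the real embedding associated to a complex embedding of a totally real field -/
def realEmb (hK : ∀ σ : K →+* ℂ, ∀ x : K, (σ x).im = 0) (σ : K →+* ℂ) : K →+* ℝ where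
  toFun x := (σ x).re
  map_one' := by simp
  map_mul' x y := by
    have := hK σ x; have := hK σ y
    simp [Complex.mul_re, *]
  map_zero' := by simp
  map_add' x y := by simp [Complex.add_re]

lemma realEmb_eq (hK : ∀ σ : K →+* ℂ, ∀ x : K, (σ x).im = 0) (σ : K →+* ℂ) (x : K) :
    ((realEmb hK σ x : ℝ) : ℂ) = σ x := by
  apply Complex.ext
  · simp [realEmb]
  · simp [realEmb, hK σ x]

lemma abs_realEmb (hK : ∀ σ : K →+* ℂ, ∀ x : K, (σ x).im = 0) (σ : K →+* ℂ) (x : K) :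
    |realEmb hK σ x| = ‖σ x‖ := by
  rw [← realEmb_eq hK σ x, Complex.norm_real, Real.norm_eq_abs]

end Aux

-- generic: ring hom commutes with eval
lemma hom_eval {R S σ : Type*} [CommSemiring R] [CommSemiring S] (g : R →+* S)
    (x : σ → R) (p : MvPolynomial σ R) :
    g (eval x p) = eval (fun i => g (x i)) (map g p) := by
  rw [← eval₂_eq_eval_map]
  have : g (eval x p) = (g.comp (eval₂Hom (RingHom.id R) x)) p := rfl
  rw [this, comp_eval₂Hom]
  simp [eval₂Hom_congr rfl rfl rfl]

-- homogeneous polynomials scale under smul of the evaluation point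
lemma homog_eval_smul {n m : ℕ} (p : MvPolynomial (Fin n) ℝ) (hp : p.IsHomogeneous m)
    (c : ℝ) (x : Fin n → ℝ) : eval (c • x) p = c ^ m * eval x p := by
  rw [eval_eq, eval_eq, Finset.mul_sum]
  apply Finset.sum_congr rfl
  intro d hd
  have hdeg : ∑ i ∈ d.support, d i = m := by
    have := hp (mem_support_iff.mp hd)
    rw [Pi.one_def, ← Finsupp.degree_eq_weight_one] at this
    exact this
  have : ∏ i ∈ d.support, (c • x) i ^ d i
      = (∏ i ∈ d.support, c ^ d i) * ∏ i ∈ d.support, x i ^ d i := by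
    rw [← Finset.prod_mul_distrib]
    exact Finset.prod_congr rfl fun i _ => by simp [mul_pow]
  rw [this, Finset.prod_pow_eq_pow_sum, hdeg]; ring

-- uniform lower bound for a positive definite homogeneous real polynomial
lemma posdef_bound {n m : ℕ} (hn : 1 ≤ n) (hm : m ≠ 0) (p : MvPolynomial (Fin n) ℝ)
    (hp : p.IsHomogeneous m) (hpos : ∀ x : Fin n → ℝ, x ≠ 0 → 0 < eval x p) :
    ∃ ε > 0, ∀ x : Fin n → ℝ, ε * ‖x‖ ^ m ≤ eval x p := by
  have hFn : Nonempty (Fin n) := Fin.pos_iff_nonempty.mp hn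
  have hsne : (Metric.sphere (0 : Fin n → ℝ) 1).Nonempty := by
    refine ⟨fun _ => 1, ?_⟩
    simp [Metric.mem_sphere, dist_zero_right, pi_norm_const]
  obtain ⟨x₀, hx₀s, hx₀min⟩ := (isCompact_sphere (0 : Fin n → ℝ) 1).exists_isMinOn hsne
    (MvPolynomial.continuous_eval (p := p)).continuousOn
  have hx₀norm : ‖x₀‖ = 1 := by simpa [Metric.mem_sphere, dist_zero_right] using hx₀s
  have hx₀ne : x₀ ≠ 0 := by intro h; rw [h, norm_zero] at hx₀norm; norm_num at hx₀norm
  refine ⟨eval x₀ p, hpos x₀ hx₀ne, fun x => ?_⟩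
  rcases eq_or_ne x 0 with rfl | hx
  · have h0 : eval (0 : Fin n → ℝ) p = 0 := by
      have h := homog_eval_smul p hp 0 0
      rw [smul_zero, zero_pow hm, zero_mul] at h
      exact h
    rw [h0, norm_zero, zero_pow hm, mul_zero]
  · have hc : (0 : ℝ) < ‖x‖ := norm_pos_iff.mpr hx
    set y : Fin n → ℝ := ‖x‖⁻¹ • x with hy
    have hyn : ‖y‖ = 1 := by
      rw [hy, norm_smul, norm_inv, norm_norm, inv_mul_cancel₀ hc.ne']
    have hys : y ∈ Metric.sphere (0 : Fin n → ℝ) 1 := by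
      simp [Metric.mem_sphere, dist_zero_right, hyn]
    have hxy : x = ‖x‖ • y := by rw [hy, smul_inv_smul₀ hc.ne']
    have hev : eval x p = ‖x‖ ^ m * eval y p := by
      rw [← homog_eval_smul p hp, ← hxy]
    calc eval x₀ p * ‖x‖ ^ m ≤ eval y p * ‖x‖ ^ m :=
          mul_le_mul_of_nonneg_right (hx₀min hys) (by positivity)
      _ = eval x p := by rw [hev]; ring

-- σ α is a root of the minimal polynomial, over any characteristic zero field
lemma emb_mem_rootSet' {K L : Type*} [Field K] [CharZero K] [Algebra.IsAlgebraic ℚ K]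
    [Field L] [CharZero L] (σ : K →+* L) (α : K) : σ α ∈ (minpoly ℚ α).rootSet L := by
  have hi : IsIntegral ℚ α := (Algebra.IsAlgebraic.isAlgebraic α).isIntegral
  rw [Polynomial.mem_rootSet]
  refine ⟨minpoly.ne_zero hi, ?_⟩
  have h := Polynomial.aeval_algHom_apply σ.toRatAlgHom α (minpoly ℚ α)
  rw [minpoly.aeval, map_zero] at h
  exact h

-- the image polynomials form a finite set
lemma range_map_finite {K : Type*} [Field K] [CharZero K] [Algebra.IsAlgebraic ℚ K]
    {n : ℕ} (f : MvPolynomial (Fin n) K) :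
    (Set.range fun σ : K →+* ℝ => map σ f).Finite := by
  classical
  set T := f.support with hT
  set G : ({d // d ∈ T} → ℝ) → MvPolynomial (Fin n) ℝ :=
    fun t => ∑ d ∈ T.attach, monomial d.1 (t d) with hG
  have hrep : ∀ σ : K →+* ℝ, map σ f = G (fun d => σ (coeff d.1 f)) := by
    intro σ
    simp only [hG]
    rw [Finset.sum_attach T (fun d => monomial d (σ (coeff d f)))]
    conv_lhs => rw [← support_sum_monomial_coeff f]
    rw [map_sum]
    exact Finset.sum_congr rfl fun d _ => by rw [map_monomial]
  have hA : {t : {d // d ∈ T} → ℝ | ∀ d, t d ∈ (minpoly ℚ (coeff d.1 f)).rootSet ℝ}.Finite :=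
    Set.Finite.pi' (fun d => (minpoly ℚ (coeff d.1 f)).rootSet_finite ℝ)
  apply (hA.image G).subset
  rintro p ⟨σ, rfl⟩
  exact ⟨fun d => σ (coeff d.1 f), fun d => emb_mem_rootSet' σ _, (hrep σ).symm⟩

theorem house_pow_le_mul_house_infinite
    (n m : ℕ) (hn : 1 ≤ n) (hm : 2 ≤ m) (hme : Even m)
    -- K is a totally real algebraic extension of ℚ
    (K : Type*) [Field K] [CharZero K] [Algebra.IsAlgebraic ℚ K]
    (hK : ∀ σ : K →+* ℂ, ∀ x : K, (σ x).im = 0)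
    -- O is an order in K
    (O : Subalgebra ℤ K)
    (hOint : ∀ x ∈ O, IsIntegral ℤ x)
    (hOfrac : ∀ x : K, ∃ a ∈ O, ∃ b ∈ O, b ≠ 0 ∧ x = a / b)
    (f : MvPolynomial (Fin n) K) (hf : f.IsHomogeneous m)
    -- f is totally positive definite
    (hpd : ∀ σ : K →+* ℝ, ∀ x : Fin n → ℝ, x ≠ 0 → 0 < eval x (map σ f))
    (Λ : Submodule O (Fin n → K)) (hΛ : Λ.FG) :
    ∃ κ : ℕ, 0 < κ ∧
      ∀ v ∈ Λ, (⨆ i, house' (v i)) ^ m ≤ (κ : ℝ) * house' (eval v f) := by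
  classical
  have hne : Nonempty (K →+* ℂ) := emb_nonempty
  have hFn : Nonempty (Fin n) := Fin.pos_iff_nonempty.mp hn
  have hm0 : m ≠ 0 := by omega
  have hfin : (Set.range fun σ : K →+* ℝ => map σ f).Finite := range_map_finite f
  set S := hfin.toFinset with hS
  have hSne : S.Nonempty := by
    refine ⟨map (realEmb hK (Classical.choice hne)) f, ?_⟩
    rw [hS, Set.Finite.mem_toFinset]
    exact ⟨_, rfl⟩
  have key : ∀ p : {p // p ∈ S}, ∃ ε > 0, ∀ x : Fin n → ℝ, ε * ‖x‖ ^ m ≤ eval x p.1 := by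
    rintro ⟨p, hp⟩
    rw [hS, Set.Finite.mem_toFinset] at hp
    obtain ⟨σ, rfl⟩ := hp
    exact posdef_bound hn hm0 _ (hf.map σ) (hpd σ)
  choose εf hεpos hεb using key
  have hattne : S.attach.Nonempty := Finset.attach_nonempty_iff.mpr hSne
  set ε := S.attach.inf' hattne εf with hεdef
  have hε : 0 < ε := by
    rw [hεdef, Finset.lt_inf'_iff]
    exact fun p _ => hεpos p
  have hεle : ∀ p, ε ≤ εf p := fun p => Finset.inf'_le _ (Finset.mem_attach _ _)
  refine ⟨max 1 ⌈ε⁻¹⌉₊, Nat.lt_of_lt_of_le Nat.one_pos (le_max_left 1 _), ?_⟩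
  intro v hv
  set κ := max 1 ⌈ε⁻¹⌉₊ with hκdef
  have hκε : ε⁻¹ ≤ (κ : ℝ) :=
    le_trans (Nat.le_ceil _) (by exact_mod_cast le_max_right 1 ⌈ε⁻¹⌉₊)
  have hhn : 0 ≤ house' (eval v f) := house'_nonneg _
  set R := (κ : ℝ) * house' (eval v f) with hR
  have hR0 : 0 ≤ R := mul_nonneg (Nat.cast_nonneg _) hhn
  have step1 : ∀ (σ : K →+* ℂ) (i : Fin n), ‖σ (v i)‖ ^ m ≤ R := by
    intro σ i
    set τ := realEmb hK σ with hτ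
    set x : Fin n → ℝ := fun j => τ (v j) with hx
    have hmem : map τ f ∈ S := by
      rw [hS, Set.Finite.mem_toFinset]; exact ⟨τ, rfl⟩
    have h1 : ε * ‖x‖ ^ m ≤ eval x (map τ f) :=
      le_trans (mul_le_mul_of_nonneg_right (hεle ⟨_, hmem⟩) (by positivity))
        (hεb ⟨map τ f, hmem⟩ x)
    have h2 : eval x (map τ f) ≤ house' (eval v f) := by
      have he : eval x (map τ f) = τ (eval v f) := (hom_eval τ v f).symm
      rw [he]
      calc τ (eval v f) = (σ (eval v f)).re := rfl
        _ ≤ ‖σ (eval v f)‖ := Complex.re_le_norm _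
        _ ≤ house' (eval v f) := le_house' σ _
    have habs : ‖σ (v i)‖ = |x i| := (abs_realEmb hK σ (v i)).symm
    calc ‖σ (v i)‖ ^ m = |x i| ^ m := by rw [habs]
      _ ≤ ‖x‖ ^ m := by
          refine pow_le_pow_left₀ (abs_nonneg _) ?_ m
          rw [← Real.norm_eq_abs]
          exact norm_le_pi_norm x i
      _ ≤ ε⁻¹ * eval x (map τ f) := by rw [le_inv_mul_iff₀ hε]; exact h1
      _ ≤ ε⁻¹ * house' (eval v f) := mul_le_mul_of_nonneg_left h2 (by positivity)
      _ ≤ R := mul_le_mul_of_nonneg_right hκε hhn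
  have bdd : BddAbove (Set.range fun i => house' (v i)) := (Set.finite_range _).bddAbove
  have hsup_le : (⨆ i, house' (v i)) ≤ R ^ ((m : ℝ)⁻¹) := by
    refine ciSup_le fun i => house'_le fun σ => ?_
    have ha : 0 ≤ ‖σ (v i)‖ := norm_nonneg _
    calc ‖σ (v i)‖
        = (‖σ (v i)‖ ^ m) ^ ((m : ℝ)⁻¹) :=
          (Real.pow_rpow_inv_natCast ha hm0).symm
      _ ≤ R ^ ((m : ℝ)⁻¹) := Real.rpow_le_rpow (by positivity) (step1 σ i) (by positivity)
  have hsup0 : 0 ≤ ⨆ i, house' (v i) :=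
    le_trans (house'_nonneg (v (Classical.arbitrary _))) (le_ciSup bdd _)
  calc (⨆ i, house' (v i)) ^ m ≤ (R ^ ((m : ℝ)⁻¹)) ^ m := pow_le_pow_left₀ hsup0 hsup_le m
    _ = R := Real.rpow_inv_natCast_pow hR0 hm0
end
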